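/- Let reset : Fin (N+1) → Bool and define o1 : Fin (N+1) → ℤ recursively by o1(j) = 0 if reset(j), else (if j > 0 then o1(j-1) else 0) + 1, and o2(j) = (if j > 0 then o1(j-1) else 0) + o1(j) + (if j < N then o1(j+1) else 0). If for every j with 0 ≤ j ≤ N we have (j > 0 ∧ reset(j-1)) ∨ (j < N ∧ reset(j+1)) (boundary accesses defaulting to false), then 0 ≤ o2(j) ≤ 3 for all j. -/
import Mathlib


theorem stmt_1 (N : ℕ) (reset : ℕ → Bool) (o1 o2 : ℕ → ℤ)
    (h1 : ∀ j ≤ N, o1 j = if reset j then 0 else (if 0 < j then o1 (j - 1) else 0) + 1)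
    (h2 : ∀ j ≤ N, o2 j = (if 0 < j then o1 (j - 1) else 0) + o1 j
        + (if j < N then o1 (j + 1) else 0))
    (hasm : ∀ j ≤ N, (0 < j ∧ reset (j - 1) = true) ∨ (j < N ∧ reset (j + 1) = true)) :
    ∀ j ≤ N, 0 ≤ o2 j ∧ o2 j ≤ 3 := by
  have L1 : ∀ j, j ≤ N → 0 ≤ o1 j := by
    intro j
    induction j using Nat.strong_induction_on with
    | _ j ih =>
      intro hj
      rw [h1 j hj]
      split
      · exact le_refl 0
      · split
        · have := ih (j-1) (by omega) (by omega)
          omega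
        · omega
  have Lsmall : ∀ j, j ≤ N → (reset j = true ∨ j = 0 ∨ (0 < j ∧ reset (j-1) = true)) →
      o1 j ≤ 1 := by
    intro j hj hc
    rw [h1 j hj]
    rcases hc with h | h | ⟨h0, hr⟩
    · simp [h]
    · subst h
      simp only [Nat.lt_irrefl, if_false]
      split <;> omega
    · cases hrj : reset j with
      | true => simp
      | false =>
        simp only [Bool.false_eq_true, if_false, if_pos h0]
        rw [h1 (j-1) (by omega), if_pos hr]
        omega
  have L2 : ∀ j, j ≤ N → o1 j ≤ 2 := by
    intro j hj
    rw [h1 j hj]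
    cases hrj : reset j with
    | true => simp
    | false =>
      simp only [Bool.false_eq_true, if_false]
      by_cases h0 : 0 < j
      · rw [if_pos h0]
        have hjm : o1 (j-1) ≤ 1 := by
          apply Lsmall (j-1) (by omega)
          rcases hasm (j-1) (by omega) with ⟨ha, hb⟩ | ⟨ha, hb⟩
          · right; right; exact ⟨ha, hb⟩
          · exfalso
            rw [show j - 1 + 1 = j from by omega] at hb
            rw [hrj] at hb
            exact Bool.false_ne_true hb
        omega
      · rw [if_neg h0]; omega
  intro j hj
  have heq := h2 j hj
  have ha0 : 0 ≤ (if 0 < j then o1 (j - 1) else 0) := by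
    split
    · exact L1 (j-1) (by omega)
    · exact le_refl 0
  have hb0 : 0 ≤ o1 j := L1 j hj
  have hc0 : 0 ≤ (if j < N then o1 (j + 1) else 0) := by
    split
    · exact L1 (j+1) (by omega)
    · exact le_refl 0
  refine ⟨by rw [heq]; omega, ?_⟩
  rw [heq]
  rcases hasm j hj with ⟨h0, hr⟩ | ⟨hlt, hr⟩
  · -- reset (j-1) = true : first term is 0, o1 j ≤ 1, third ≤ o1 j + 1
    have ha : (if 0 < j then o1 (j - 1) else 0) = 0 := by
      rw [if_pos h0, h1 (j-1) (by omega), if_pos hr]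
    have hb : o1 j ≤ 1 := Lsmall j hj (Or.inr (Or.inr ⟨h0, hr⟩))
    have hc : (if j < N then o1 (j + 1) else 0) ≤ o1 j + 1 := by
      by_cases hjN : j < N
      · rw [if_pos hjN, h1 (j+1) (by omega)]
        split
        · omega
        · rw [if_pos (by omega), show j + 1 - 1 = j from rfl]
      · rw [if_neg hjN]; omega
    omega
  · -- reset (j+1) = true : third term is 0
    have hc : (if j < N then o1 (j + 1) else 0) = 0 := by
      rw [if_pos hlt, h1 (j+1) (by omega), if_pos hr]
    cases hrj : reset j with
    | false =>
      have ha : (if 0 < j then o1 (j - 1) else 0) ≤ 1 := by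
        by_cases h0 : 0 < j
        · rw [if_pos h0]
          apply Lsmall (j-1) (by omega)
          rcases hasm (j-1) (by omega) with ⟨ha', hb'⟩ | ⟨ha', hb'⟩
          · right; right; exact ⟨ha', hb'⟩
          · exfalso
            rw [show j - 1 + 1 = j from by omega] at hb'
            rw [hrj] at hb'
            exact Bool.false_ne_true hb'
        · rw [if_neg h0]; omega
      have hb : o1 j = (if 0 < j then o1 (j - 1) else 0) + 1 := by
        rw [h1 j hj]
        simp [hrj]
      omega
    | true =>
      have hb : o1 j = 0 := by rw [h1 j hj, if_pos hrj]
      have ha : (if 0 < j then o1 (j - 1) else 0) ≤ 2 := by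
        split
        · exact L2 (j-1) (by omega)
        · omega
      omega
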